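/- Evaluating the separating form: with σ_i = ⧢_{j≠i}(a_{ij} π^{()} + b_{ij} π^{I_{ij}}) as constructed, for any group-like x_l in the range of the signature map, σ_i(x_l) = ∏_{j≠i} (π^{I_{ij}}(x_j) - π^{I_{ij}}(x_l)) / (π^{I_{ij}}(x_j) - π^{I_{ij}}(x_i)); in particular σ_i(x_i) = 1 and σ_i(x_l) = 0 for l ≠ i. -/

import Mathlib

open MeasureTheory Set

/-- Iterated integral of a path against its derivative; the head letter is integrated
outermost (so this corresponds to the reversed word). -/
noncomputable def iterInt {d : ℕ} (X : ℝ → Fin d → ℝ) (a : ℝ) : List (Fin d) → ℝ → ℝ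
  | [], _ => 1
  | i :: I, b => ∫ u in a..b, iterInt X a I u * deriv (fun s => X s i) u

/-- Coordinate iterated integral `π^I(S(X))` over `[a,b]` for the word `I = (i₁,…,iₙ)`
(innermost integration first). -/
noncomputable def sigCoord {d : ℕ} (X : ℝ → Fin d → ℝ) (a b : ℝ) (I : List (Fin d)) : ℝ :=
  iterInt X a I.reverse b

/-- The signature of a path over `[a,b]`, as the family of its coordinate iterated
integrals indexed by words; this represents an element of the tensor algebra `T((ℝ^d))`. -/
noncomputable def Sig {d : ℕ} (X : ℝ → Fin d → ℝ) (a b : ℝ) : List (Fin d) → ℝ :=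
  fun I => sigCoord X a b I

/-- The product of the tensor algebra `T((ℝ^d))` in coordinates. -/
noncomputable def tmul {d : ℕ} (x y : List (Fin d) → ℝ) : List (Fin d) → ℝ :=
  fun w => ∑ k ∈ Finset.range (w.length + 1), x (w.take k) * y (w.drop k)

/-- The unit of the tensor algebra. -/
def tunit {d : ℕ} : List (Fin d) → ℝ := fun w => if w = [] then 1 else 0

/-- The tensor exponential `exp(v) = Σ v^{⊗n}/n!` in coordinates. -/
noncomputable def texp {d : ℕ} (v : Fin d → ℝ) : List (Fin d) → ℝ :=
  fun w => (w.map v).prod / w.length.factorial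

/-- The multiset of shuffles of two words. -/
def shuffles {α : Type*} : List α → List α → Multiset (List α)
  | [], v => {v}
  | u, [] => {u}
  | a :: u, b :: v => ((shuffles u (b :: v)).map (a :: ·)) + ((shuffles (a :: u) v).map (b :: ·))
  termination_by u v => u.length + v.length

/-- `x` is in the range of the signature map on continuous bounded-variation paths. -/
def IsSignature {d : ℕ} (x : List (Fin d) → ℝ) : Prop :=
  ∃ (X : ℝ → Fin d → ℝ) (a b : ℝ), a ≤ b ∧ ContinuousOn X (Set.Icc a b) ∧
    BoundedVariationOn X (Set.Icc a b) ∧ x = Sig X a b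

/-- Evaluation of a (finitely supported) linear form on `T((ℝ^d))`. -/
noncomputable def formEval {d : ℕ} (f : List (Fin d) →₀ ℝ) (x : List (Fin d) → ℝ) : ℝ :=
  f.sum fun w c => c * x w

/-- The shuffle product of two linear forms, extended bilinearly from words. -/
noncomputable def shuffleForm {d : ℕ} (f g : List (Fin d) →₀ ℝ) : List (Fin d) →₀ ℝ :=
  f.sum fun u cu => g.sum fun v cv =>
    (cu * cv) • ((shuffles u v).map fun w => Finsupp.single w (1 : ℝ)).sum

section Aux


@[simp] lemma shuffles_nil_left {α : Type*} (v : List α) : shuffles [] v = {v} := by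
  rw [shuffles]

@[simp] lemma shuffles_nil_right {α : Type*} (u : List α) : shuffles u [] = {u} := by
  cases u <;> rw [shuffles] <;> simp

lemma shuffles_cons_cons {α : Type*} (a b : α) (u v : List α) :
    shuffles (a :: u) (b :: v)
      = ((shuffles u (b :: v)).map (a :: ·)) + ((shuffles (a :: u) v).map (b :: ·)) := by
  rw [shuffles]

lemma shuffles_snoc {α : Type*} : ∀ (N : ℕ) (u v : List α), u.length + v.length ≤ N →
    ∀ (a b : α), shuffles (u ++ [a]) (v ++ [b])
      = ((shuffles u (v ++ [b])).map (· ++ [a])) + ((shuffles (u ++ [a]) v).map (· ++ [b]))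
  | N, [], [], _, a, b => by
      simp only [List.nil_append, shuffles_cons_cons, shuffles_nil_left, shuffles_nil_right,
        Multiset.map_singleton]
      exact Multiset.pair_comm _ _
  | 0, c :: u, v, h, a, b => by simp at h
  | 0, u, c :: v, h, a, b => by simp at h
  | (N+1), [], c :: v, h, a, b => by
      have IH := shuffles_snoc N [] v (by simp at h ⊢; omega) a b
      simp only [List.nil_append, List.cons_append] at IH ⊢
      rw [shuffles_cons_cons a c, IH]
      simp only [shuffles_cons_cons, shuffles_nil_left, shuffles_nil_right,
        Multiset.map_add, Multiset.map_map, Multiset.map_singleton, Function.comp_def,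
        List.cons_append, List.nil_append, List.append_assoc]
      abel
  | (N+1), c :: u, [], h, a, b => by
      have IH := shuffles_snoc N u [] (by simp at h ⊢; omega) a b
      simp only [List.nil_append, List.cons_append] at IH ⊢
      rw [shuffles_cons_cons c b, IH]
      simp only [shuffles_cons_cons, shuffles_nil_left, shuffles_nil_right,
        Multiset.map_add, Multiset.map_map, Multiset.map_singleton, Function.comp_def,
        List.cons_append, List.nil_append, List.append_assoc]
      abel
  | (N+1), c :: u, e :: v, h, a, b => by
      have IH1 := shuffles_snoc N u (e :: v) (by simp at h ⊢; omega) a b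
      have IH2 := shuffles_snoc N (c :: u) v (by simp at h ⊢; omega) a b
      simp only [List.nil_append, List.cons_append] at IH1 IH2 ⊢
      rw [shuffles_cons_cons c e, IH1, IH2, shuffles_cons_cons c e, shuffles_cons_cons c e]
      simp only [Multiset.map_add, Multiset.map_map, Function.comp_def, List.cons_append]
      abel

lemma shuffles_reverse {α : Type*} : ∀ (N : ℕ) (u v : List α), u.length + v.length ≤ N →
    (shuffles u v).map List.reverse = shuffles u.reverse v.reverse
  | _, [], v, _ => by simp
  | _, c :: u, [], _ => by simp
  | 0, c :: u, e :: v, h => by simp at h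
  | (N+1), c :: u, e :: v, h => by
      have IH1 := shuffles_reverse N u (e :: v) (by simp at h ⊢; omega)
      have IH2 := shuffles_reverse N (c :: u) v (by simp at h ⊢; omega)
      have hsn := shuffles_snoc (u.length + v.length + 1) u.reverse v.reverse
        (by simp) c e
      rw [shuffles_cons_cons, Multiset.map_add, Multiset.map_map, Multiset.map_map]
      simp only [Function.comp_def, List.reverse_cons] at IH1 IH2 ⊢
      rw [hsn, ← IH1, ← IH2, Multiset.map_map, Multiset.map_map]
      simp [Function.comp_def]



lemma contOn_mul_integrableOn {a b : ℝ} {φ h : ℝ → ℝ}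
    (hφ : ContinuousOn φ (Set.Icc a b)) (hh : IntegrableOn h (Set.Ioc a b)) :
    IntegrableOn (fun t => φ t * h t) (Set.Ioc a b) := by
  obtain ⟨C, hC⟩ := (isCompact_Icc (a := a) (b := b)).exists_bound_of_continuousOn hφ
  refine Integrable.bdd_mul (c := C) hh ?_ ?_
  · exact ((hφ.mono Set.Ioc_subset_Icc_self).aestronglyMeasurable measurableSet_Ioc)
  · exact ae_restrict_of_forall_mem measurableSet_Ioc
      (fun t ht => hC t (Set.Ioc_subset_Icc_self ht))

lemma primitive_contOn {a b : ℝ} (hab : a ≤ b) {f : ℝ → ℝ}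
    (hf : IntegrableOn f (Set.Ioc a b)) :
    ContinuousOn (fun t => ∫ s in a..t, f s) (Set.Icc a b) := by
  have := intervalIntegral.continuousOn_primitive_interval (a := a) (b := b) (μ := volume)
    (f := f) (by rw [Set.uIcc_of_le hab]; exact (integrableOn_Icc_iff_integrableOn_Ioc (f := f)).2 hf)
  rwa [Set.uIcc_of_le hab] at this

lemma mul_integral {a b : ℝ} (hab : a ≤ b) {f h : ℝ → ℝ}
    (hf : IntegrableOn f (Set.Ioc a b)) (hh : IntegrableOn h (Set.Ioc a b)) :
    (∫ s in a..b, f s) * (∫ t in a..b, h t)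
      = (∫ t in a..b, (∫ s in a..t, f s) * h t)
        + (∫ s in a..b, (∫ t in a..s, h t) * f s) := by
  set μ : Measure ℝ := volume.restrict (Set.Ioc a b) with hμ
  set K : ℝ → ℝ → ℝ := fun s t => Set.indicator {p : ℝ × ℝ | p.2 < p.1}
      (fun q : ℝ × ℝ => f q.1 * h q.2) (s, t) with hKdef
  have hK : Integrable (fun p : ℝ × ℝ => Set.indicator {p : ℝ × ℝ | p.2 < p.1}
      (fun q : ℝ × ℝ => f q.1 * h q.2) p) (μ.prod μ) :=
    (hf.mul_prod hh).indicator (measurableSet_lt measurable_snd measurable_fst)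
  have swap : (∫ s, ∫ t, K s t ∂μ ∂μ) = (∫ t, ∫ s, K s t ∂μ ∂μ) :=
    integral_integral_swap (by exact hK)
  -- inner integral computations
  have inner1 : ∀ t ∈ Set.Ioc a b, (∫ s, K s t ∂μ) = (∫ s in t..b, f s) * h t := by
    intro t ht
    have : (fun s => K s t) = Set.indicator (Set.Ioi t) (fun s => f s * h t) := by
      funext s
      simp only [hKdef, Set.indicator, Set.mem_setOf_eq, Set.mem_Ioi]
    rw [congrArg (integral μ) this]
    simp only [MeasureTheory.integral_indicator measurableSet_Ioi]
    rw [hμ, Measure.restrict_restrict measurableSet_Ioi]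
    have hset : Set.Ioi t ∩ Set.Ioc a b = Set.Ioc t b := by
      ext s; simp only [Set.mem_inter_iff, Set.mem_Ioi, Set.mem_Ioc]
      exact ⟨fun ⟨h1, _, h3⟩ => ⟨h1, h3⟩, fun ⟨h1, h2⟩ => ⟨h1, lt_trans ht.1 h1, h2⟩⟩
    rw [hset, ← intervalIntegral.integral_of_le ht.2, ← intervalIntegral.integral_mul_const]
  have inner2 : ∀ s ∈ Set.Ioc a b, (∫ t, K s t ∂μ) = (∫ t in a..s, h t) * f s := by
    intro s hs
    have : (fun t => K s t) = Set.indicator (Set.Iio s) (fun t => f s * h t) := by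
      funext t
      simp only [hKdef, Set.indicator, Set.mem_setOf_eq, Set.mem_Iio]
    rw [congrArg (integral μ) this]
    simp only [MeasureTheory.integral_indicator measurableSet_Iio]
    rw [hμ, Measure.restrict_restrict measurableSet_Iio]
    have hset : Set.Iio s ∩ Set.Ioc a b = Set.Ioo a s := by
      ext t; simp only [Set.mem_inter_iff, Set.mem_Iio, Set.mem_Ioc, Set.mem_Ioo]
      exact ⟨fun ⟨h1, h2, _⟩ => ⟨h2, h1⟩, fun ⟨h1, h2⟩ => ⟨h2, h1, le_trans h2.le hs.2⟩⟩
    rw [hset, ← MeasureTheory.integral_Ioc_eq_integral_Ioo,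
      ← intervalIntegral.integral_of_le hs.1.le]
    rw [intervalIntegral.integral_const_mul, mul_comm]
  -- the cross term
  have cross : (∫ t in a..b, (∫ s in t..b, f s) * h t)
      = (∫ s in a..b, (∫ t in a..s, h t) * f s) := by
    rw [intervalIntegral.integral_of_le hab, intervalIntegral.integral_of_le hab]
    calc ∫ t in Set.Ioc a b, (∫ s in t..b, f s) * h t
        = ∫ t, ∫ s, K s t ∂μ ∂μ :=
          (setIntegral_congr_fun measurableSet_Ioc (fun t ht => (inner1 t ht))).symm
      _ = ∫ s, ∫ t, K s t ∂μ ∂μ := swap.symm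
      _ = ∫ s in Set.Ioc a b, (∫ t in a..s, h t) * f s :=
          setIntegral_congr_fun measurableSet_Ioc (fun s hs => inner2 s hs)
  -- splitting
  have hsplit : ∀ t ∈ Set.Icc a b,
      (∫ s in a..b, f s) * h t = (∫ s in a..t, f s) * h t + (∫ s in t..b, f s) * h t := by
    intro t ht
    rw [← add_mul, intervalIntegral.integral_add_adjacent_intervals
      ((intervalIntegrable_iff_integrableOn_Ioc_of_le ht.1).2
        (hf.mono_set (Set.Ioc_subset_Ioc_right ht.2)))
      ((intervalIntegrable_iff_integrableOn_Ioc_of_le ht.2).2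
        (hf.mono_set (Set.Ioc_subset_Ioc_left ht.1)))]
  have i1 : IntervalIntegrable (fun t => (∫ s in a..t, f s) * h t) volume a b :=
    (intervalIntegrable_iff_integrableOn_Ioc_of_le hab).2
      (contOn_mul_integrableOn (primitive_contOn hab hf) hh)
  have i2 : IntervalIntegrable (fun t => (∫ s in t..b, f s) * h t) volume a b := by
    refine (intervalIntegrable_iff_integrableOn_Ioc_of_le hab).2
      (contOn_mul_integrableOn ?_ hh)
    have := intervalIntegral.continuousOn_primitive_interval_left (a := a) (b := b)
      (μ := volume) (f := f)
      (by rw [Set.uIcc_of_le hab]; exact (integrableOn_Icc_iff_integrableOn_Ioc (f := f)).2 hf)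
    rwa [Set.uIcc_of_le hab] at this
  calc (∫ s in a..b, f s) * (∫ t in a..b, h t)
      = ∫ t in a..b, (∫ s in a..b, f s) * h t := by
        rw [intervalIntegral.integral_const_mul]
    _ = ∫ t in a..b, ((∫ s in a..t, f s) * h t + (∫ s in t..b, f s) * h t) :=
        intervalIntegral.integral_congr (fun t ht => hsplit t (by rwa [Set.uIcc_of_le hab] at ht))
    _ = (∫ t in a..b, (∫ s in a..t, f s) * h t) + (∫ t in a..b, (∫ s in t..b, f s) * h t) :=
        intervalIntegral.integral_add i1 i2
    _ = (∫ t in a..b, (∫ s in a..t, f s) * h t) + (∫ s in a..b, (∫ t in a..s, h t) * f s) := by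
        rw [cross]



lemma monotone_deriv_integrableOn {p : ℝ → ℝ} (hp : Monotone p) (a b : ℝ) :
    IntegrableOn (deriv p) (Set.Ioo a b) := by
  set D : ℝ → ℝ := fun x => (Measure.rnDeriv hp.stieltjesFunction.measure volume x).toReal
    with hD
  have hDmeas : Measurable D := (Measure.measurable_rnDeriv _ _).ennreal_toReal
  have hDint : IntegrableOn D (Set.Ioo a b) := by
    refine integrable_toReal_of_lintegral_ne_top
      ((Measure.measurable_rnDeriv _ _).aemeasurable) ?_
    refine ne_top_of_le_ne_top ?_ (Measure.setLIntegral_rnDeriv_le (Set.Ioo a b))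
    refine ne_top_of_le_ne_top ?_ (measure_mono Set.Ioo_subset_Ioc_self)
    rw [hp.stieltjesFunction.measure_Ioc]
    exact ENNReal.ofReal_ne_top
  have hae : deriv p =ᵐ[volume] D := by
    filter_upwards [hp.ae_hasDerivAt] with x hx
    exact hx.deriv
  exact hDint.congr (ae_restrict_of_ae hae.symm)

lemma bv_deriv_integrableOn {d : ℕ} (X : ℝ → Fin d → ℝ) (a b : ℝ) (hab : a ≤ b)
    (hBV : BoundedVariationOn X (Set.Icc a b)) (i : Fin d) :
    IntegrableOn (fun u => deriv (fun s => X s i) u) (Set.Ioc a b) := by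
  have hcoord : BoundedVariationOn (fun s => X s i) (Set.Icc a b) :=
    (LipschitzWith.eval i).comp_boundedVariationOn hBV
  obtain ⟨p, q, hpm, hqm, hpq⟩ :=
    hcoord.locallyBoundedVariationOn.exists_monotoneOn_sub_monotoneOn
  set c : ℝ → ℝ := fun t => max a (min t b) with hc
  have hcmem : ∀ t, c t ∈ Set.Icc a b := fun t =>
    ⟨le_max_left _ _, max_le hab (min_le_right _ _)⟩
  have hcid : ∀ t ∈ Set.Icc a b, c t = t := fun t ht => by
    rw [hc]; simp only [min_eq_left ht.2, max_eq_right ht.1]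
  have hcmono : Monotone c := fun s t hst =>
    max_le_max le_rfl (min_le_min hst le_rfl)
  have hPm : Monotone (p ∘ c) := fun s t hst => hpm (hcmem s) (hcmem t) (hcmono hst)
  have hQm : Monotone (q ∘ c) := fun s t hst => hqm (hcmem s) (hcmem t) (hcmono hst)
  have key : IntegrableOn (fun u => deriv (p ∘ c) u - deriv (q ∘ c) u) (Set.Ioo a b) :=
    (monotone_deriv_integrableOn hPm a b).sub (monotone_deriv_integrableOn hQm a b)
  rw [integrableOn_Ioc_iff_integrableOn_Ioo]
  refine key.congr ?_
  have h1 := hPm.ae_hasDerivAt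
  have h2 := hQm.ae_hasDerivAt
  have : ∀ᵐ u ∂volume, u ∈ Set.Ioo a b →
      deriv (p ∘ c) u - deriv (q ∘ c) u = deriv (fun s => X s i) u := by
    filter_upwards [h1, h2] with u hu1 hu2 hu
    have heq : (fun t => p (c t) - q (c t)) =ᶠ[nhds u] (fun s => X s i) := by
      filter_upwards [isOpen_Ioo.mem_nhds hu] with t ht
      have hct : c t = t := hcid t (Set.Ioo_subset_Icc_self ht)
      rw [hct]
      have h3 := congrFun hpq t
      simp only [Pi.sub_apply] at h3
      rw [h3]
    rw [← heq.deriv_eq]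
    have hd : HasDerivAt (fun t => p (c t) - q (c t)) _ u := hu1.sub hu2
    rw [hd.deriv, hu1.deriv, hu2.deriv]
  exact (ae_restrict_iff' measurableSet_Ioo).2 this

section ShuffleIdentity

variable {d : ℕ} {X : ℝ → Fin d → ℝ} {a b : ℝ}

lemma iterInt_nil : iterInt X a ([] : List (Fin d)) = fun _ => 1 := rfl

lemma iterInt_cons (i : Fin d) (I : List (Fin d)) :
    iterInt X a (i :: I) = fun t => ∫ u in a..t,
      iterInt X a I u * deriv (fun s => X s i) u := rfl

lemma iterInt_contOn (hab : a ≤ b)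
    (hg : ∀ i, IntegrableOn (fun u => deriv (fun s => X s i) u) (Set.Ioc a b)) :
    ∀ I : List (Fin d), ContinuousOn (iterInt X a I) (Set.Icc a b) := by
  intro I
  induction I with
  | nil => rw [iterInt_nil]; exact continuousOn_const
  | cons i I ih =>
      rw [iterInt_cons]
      exact primitive_contOn hab (contOn_mul_integrableOn ih (hg i))

lemma iterInt_mul_integrableOn (hab : a ≤ b)
    (hg : ∀ i, IntegrableOn (fun u => deriv (fun s => X s i) u) (Set.Ioc a b))
    (I : List (Fin d)) (i : Fin d) :
    IntegrableOn (fun u => iterInt X a I u * deriv (fun s => X s i) u) (Set.Ioc a b) :=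
  contOn_mul_integrableOn (iterInt_contOn hab hg I) (hg i)

lemma multiset_sum_intervalIntegrable {α : Type*} (m : Multiset α) (F : α → ℝ → ℝ) (t : ℝ)
    (hF : ∀ w ∈ m, IntervalIntegrable (F w) volume a t) :
    IntervalIntegrable (fun s => (m.map (fun w => F w s)).sum) volume a t := by
  induction m using Multiset.induction_on with
  | empty => simp [intervalIntegrable_const]
  | cons w m ih =>
      simp only [Multiset.map_cons, Multiset.sum_cons]
      exact (hF w (Multiset.mem_cons_self w m)).add
        (ih (fun w' hw' => hF w' (Multiset.mem_cons_of_mem hw')))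

lemma multiset_sum_intervalIntegral {α : Type*} (m : Multiset α) (F : α → ℝ → ℝ) (t : ℝ)
    (hF : ∀ w ∈ m, IntervalIntegrable (F w) volume a t) :
    (m.map (fun w => ∫ s in a..t, F w s)).sum = ∫ s in a..t, (m.map (fun w => F w s)).sum := by
  induction m using Multiset.induction_on with
  | empty => simp
  | cons w m ih =>
      simp only [Multiset.map_cons, Multiset.sum_cons]
      rw [ih (fun w' hw' => hF w' (Multiset.mem_cons_of_mem hw')),
        ← intervalIntegral.integral_add (hF w (Multiset.mem_cons_self w m))
          (multiset_sum_intervalIntegrable m F t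
            (fun w' hw' => hF w' (Multiset.mem_cons_of_mem hw')))]

lemma iterInt_shuffle (hab : a ≤ b)
    (hg : ∀ i, IntegrableOn (fun u => deriv (fun s => X s i) u) (Set.Ioc a b)) :
    ∀ (N : ℕ) (u v : List (Fin d)), u.length + v.length ≤ N → ∀ t ∈ Set.Icc a b,
      ((shuffles u v).map (fun w => iterInt X a w t)).sum
        = iterInt X a u t * iterInt X a v t
  | _, [], v, _, t, _ => by simp [iterInt_nil]
  | _, c :: u, [], _, t, _ => by simp [iterInt_nil]
  | 0, c :: u, e :: v, h, t, _ => by simp at h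
  | (N+1), c :: u, e :: v, h, t, ht => by
      have hat : a ≤ t := ht.1
      have hIoc : Set.Ioc a t ⊆ Set.Ioc a b := Set.Ioc_subset_Ioc le_rfl ht.2
      have hInt : ∀ (I : List (Fin d)) (i : Fin d),
          IntervalIntegrable (fun s => iterInt X a I s * deriv (fun s' => X s' i) s)
            volume a t :=
        fun I i => (intervalIntegrable_iff_integrableOn_Ioc_of_le hat).2
          ((iterInt_mul_integrableOn hab hg I i).mono_set hIoc)
      have IH1 := iterInt_shuffle hab hg N u (e :: v) (by simp at h ⊢; omega)
      have IH2 := iterInt_shuffle hab hg N (c :: u) v (by simp at h ⊢; omega)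
      rw [shuffles_cons_cons, Multiset.map_add, Multiset.sum_add,
        Multiset.map_map, Multiset.map_map]
      have hfun1 : ((fun w => iterInt X a w t) ∘ (c :: ·))
          = (fun w : List (Fin d) => ∫ s in a..t,
              iterInt X a w s * deriv (fun s' => X s' c) s) := rfl
      have hfun2 : ((fun w => iterInt X a w t) ∘ (e :: ·))
          = (fun w : List (Fin d) => ∫ s in a..t,
              iterInt X a w s * deriv (fun s' => X s' e) s) := rfl
      have term1 : ((shuffles u (e :: v)).map ((fun w => iterInt X a w t) ∘ (c :: ·))).sum
          = ∫ s in a..t, (iterInt X a u s * iterInt X a (e :: v) s)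
              * deriv (fun s' => X s' c) s := by
        rw [hfun1, multiset_sum_intervalIntegral _ _ t (fun w _ => hInt w c)]
        apply intervalIntegral.integral_congr
        intro s hs
        rw [Set.uIcc_of_le hat] at hs
        beta_reduce
        rw [Multiset.sum_map_mul_right, IH1 s (Set.Icc_subset_Icc le_rfl ht.2 hs)]
      have term2 : ((shuffles (c :: u) v).map ((fun w => iterInt X a w t) ∘ (e :: ·))).sum
          = ∫ s in a..t, (iterInt X a (c :: u) s * iterInt X a v s)
              * deriv (fun s' => X s' e) s := by
        rw [hfun2, multiset_sum_intervalIntegral _ _ t (fun w _ => hInt w e)]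
        apply intervalIntegral.integral_congr
        intro s hs
        rw [Set.uIcc_of_le hat] at hs
        beta_reduce
        rw [Multiset.sum_map_mul_right, IH2 s (Set.Icc_subset_Icc le_rfl ht.2 hs)]
      rw [term1, term2]
      have key := mul_integral hat
        (f := fun s => iterInt X a u s * deriv (fun s' => X s' c) s)
        (h := fun s => iterInt X a v s * deriv (fun s' => X s' e) s)
        ((iterInt_mul_integrableOn hab hg u c).mono_set hIoc)
        ((iterInt_mul_integrableOn hab hg v e).mono_set hIoc)
      have lhs1 : iterInt X a (c :: u) t
          = ∫ s in a..t, iterInt X a u s * deriv (fun s' => X s' c) s := rfl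
      have lhs2 : iterInt X a (e :: v) t
          = ∫ s in a..t, iterInt X a v s * deriv (fun s' => X s' e) s := rfl
      rw [lhs1, lhs2, key]
      have e1 : (∫ s in a..t, (∫ s' in a..s, iterInt X a u s' * deriv (fun r => X r c) s')
            * (iterInt X a v s * deriv (fun s' => X s' e) s))
          = ∫ s in a..t, (iterInt X a (c :: u) s * iterInt X a v s)
              * deriv (fun s' => X s' e) s := by
        apply intervalIntegral.integral_congr
        intro s _
        show (iterInt X a (c :: u) s) * (iterInt X a v s * deriv (fun s' => X s' e) s) = _
        ring
      have e2 : (∫ s in a..t, (∫ s' in a..s, iterInt X a v s' * deriv (fun r => X r e) s')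
            * (iterInt X a u s * deriv (fun s' => X s' c) s))
          = ∫ s in a..t, (iterInt X a u s * iterInt X a (e :: v) s)
              * deriv (fun s' => X s' c) s := by
        apply intervalIntegral.integral_congr
        intro s _
        show (iterInt X a (e :: v) s) * (iterInt X a u s * deriv (fun s' => X s' c) s) = _
        ring
      rw [e1, e2]
      ring

lemma sig_shuffle (hab : a ≤ b)
    (hg : ∀ i, IntegrableOn (fun u => deriv (fun s => X s i) u) (Set.Ioc a b))
    (u v : List (Fin d)) :
    ((shuffles u v).map (Sig X a b)).sum = Sig X a b u * Sig X a b v := by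
  have hrev := shuffles_reverse (u.length + v.length) u v le_rfl
  have : (shuffles u v).map (Sig X a b)
      = ((shuffles u v).map List.reverse).map (fun w => iterInt X a w b) := by
    rw [Multiset.map_map]
    rfl
  rw [this, hrev]
  have := iterInt_shuffle hab hg (u.reverse.length + v.reverse.length) u.reverse v.reverse
    le_rfl b (Set.right_mem_Icc.2 hab)
  rw [this]
  rfl

end ShuffleIdentity


section Algebra

variable {d : ℕ}

noncomputable def evalLin (y : List (Fin d) → ℝ) : (List (Fin d) →₀ ℝ) →ₗ[ℝ] ℝ :=
  Finsupp.linearCombination ℝ y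

lemma formEval_eq (f : List (Fin d) →₀ ℝ) (y : List (Fin d) → ℝ) :
    formEval f y = evalLin y f := by
  simp [formEval, evalLin, Finsupp.linearCombination_apply, Finsupp.sum, smul_eq_mul]

lemma formEval_shuffleForm (f g : List (Fin d) →₀ ℝ) (y : List (Fin d) → ℝ)
    (hy : ∀ u v, ((shuffles u v).map y).sum = y u * y v) :
    formEval (shuffleForm f g) y = formEval f y * formEval g y := by
  simp only [formEval_eq, shuffleForm]
  rw [map_finsuppSum]
  have step : ∀ u cu, evalLin y (g.sum fun v cv =>
      (cu * cv) • ((shuffles u v).map fun w => Finsupp.single w (1 : ℝ)).sum)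
      = g.sum fun v cv => (cu * cv) * (y u * y v) := by
    intro u cu
    rw [map_finsuppSum]
    refine Finsupp.sum_congr (fun v _ => ?_)
    rw [_root_.map_smul, map_multiset_sum, Multiset.map_map]
    have : ((shuffles u v).map (⇑(evalLin y) ∘ fun w => Finsupp.single w (1 : ℝ)))
        = (shuffles u v).map y := by
      refine Multiset.map_congr rfl (fun w _ => ?_)
      simp [evalLin, Finsupp.linearCombination_single]
    rw [this, hy u v, smul_eq_mul]
  calc (f.sum fun u cu => evalLin y (g.sum fun v cv =>
          (cu * cv) • ((shuffles u v).map fun w => Finsupp.single w (1 : ℝ)).sum))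
      = f.sum fun u cu => g.sum fun v cv => (cu * cv) * (y u * y v) :=
        Finsupp.sum_congr (fun u hu => step u _)
    _ = f.sum fun u cu => (cu * y u) * (g.sum fun v cv => cv * y v) := by
        refine Finsupp.sum_congr (fun u _ => ?_)
        rw [Finsupp.mul_sum]
        exact Finsupp.sum_congr (fun v _ => by ring)
    _ = (f.sum fun u cu => cu * y u) * (g.sum fun v cv => cv * y v) := by
        rw [← Finsupp.sum_mul]
    _ = evalLin y f * evalLin y g := by
        rw [← formEval_eq, ← formEval_eq]; rfl

lemma formEval_single (w : List (Fin d)) (c : ℝ) (y : List (Fin d) → ℝ) :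
    formEval (Finsupp.single w c) y = c * y w :=
  Finsupp.sum_single_index (by simp)

lemma formEval_base (A B : ℝ) (w : List (Fin d)) (y : List (Fin d) → ℝ) :
    formEval (A • Finsupp.single ([] : List (Fin d)) (1 : ℝ) + B • Finsupp.single w (1 : ℝ)) y
      = A * y [] + B * y w := by
  simp only [formEval_eq, map_add, _root_.map_smul, smul_eq_mul]
  simp [evalLin, Finsupp.linearCombination_single]

lemma eval_foldr {ι : Type*} (L : List ι) (A B : ι → ℝ) (w : ι → List (Fin d))
    (y : List (Fin d) → ℝ)
    (hy : ∀ u v, ((shuffles u v).map y).sum = y u * y v) (hy0 : y [] = 1) :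
    formEval (L.foldr (fun j acc => shuffleForm
        (A j • Finsupp.single ([] : List (Fin d)) (1 : ℝ)
          + B j • Finsupp.single (w j) (1 : ℝ)) acc)
      (Finsupp.single ([] : List (Fin d)) (1 : ℝ))) y
      = (L.map (fun j => A j + B j * y (w j))).prod := by
  induction L with
  | nil => simp [formEval_single, hy0]
  | cons j L ih =>
      simp only [List.foldr_cons, List.map_cons, List.prod_cons]
      rw [formEval_shuffleForm _ _ _ hy, ih, formEval_base, hy0, mul_one]

lemma isSignature_grouplike {x : List (Fin d) → ℝ} (hx : IsSignature x) :
    (∀ u v, ((shuffles u v).map x).sum = x u * x v) ∧ x [] = 1 := by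
  obtain ⟨X, a, b, hab, _hcont, hBV, rfl⟩ := hx
  refine ⟨fun u v => sig_shuffle hab (fun i => bv_deriv_integrableOn X a b hab hBV i) u v, rfl⟩

end Algebra

end Aux

/-- evaluation of the separating shuffle-polynomial form
`σ_i = ⧢_{j≠i}(a_{ij} π^{()} + b_{ij} π^{I_{ij}})` at group-like elements. -/
theorem eval_separating_form {d n : ℕ} (x : Fin n → (List (Fin d) → ℝ))
    (hsig : ∀ i, IsSignature (x i)) (hdist : ∀ i j, i ≠ j → x i ≠ x j)
    (I : Fin n → Fin n → List (Fin d))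
    (hsep : ∀ i j, i ≠ j → x i (I i j) ≠ x j (I i j))
    (aC bC : Fin n → Fin n → ℝ)
    (ha : ∀ i j, aC i j = x j (I i j) / (x j (I i j) - x i (I i j)))
    (hb : ∀ i j, bC i j = -1 / (x j (I i j) - x i (I i j)))
    (i : Fin n) :
    let σi : List (Fin d) →₀ ℝ :=
      ((Finset.univ.erase i).toList).foldr
        (fun j acc => shuffleForm
          (aC i j • Finsupp.single ([] : List (Fin d)) (1:ℝ)
            + bC i j • Finsupp.single (I i j) (1:ℝ)) acc)
        (Finsupp.single ([] : List (Fin d)) (1:ℝ))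
    (∀ l, formEval σi (x l)
        = ∏ j ∈ Finset.univ.erase i,
            (x j (I i j) - x l (I i j)) / (x j (I i j) - x i (I i j))) ∧
    formEval σi (x i) = 1 ∧ ∀ l, l ≠ i → formEval σi (x l) = 0 := by

  intro σi
  have hden : ∀ j ∈ Finset.univ.erase i, x j (I i j) - x i (I i j) ≠ 0 := by
    intro j hj
    have hij : i ≠ j := fun h => (Finset.mem_erase.1 hj).1 h.symm
    exact sub_ne_zero.2 (hsep i j hij).symm
  have main : ∀ l, formEval σi (x l)
      = ∏ j ∈ Finset.univ.erase i,
          (x j (I i j) - x l (I i j)) / (x j (I i j) - x i (I i j)) := by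
    intro l
    obtain ⟨hgl, h0l⟩ := isSignature_grouplike (hsig l)
    have h1 := eval_foldr ((Finset.univ.erase i).toList) (fun j => aC i j)
      (fun j => bC i j) (fun j => I i j) (x l) hgl h0l
    have h2 : (((Finset.univ.erase i).toList).map
          (fun j => aC i j + bC i j * x l (I i j))).prod
        = ∏ j ∈ Finset.univ.erase i,
            (x j (I i j) - x l (I i j)) / (x j (I i j) - x i (I i j)) := by
      rw [Finset.prod_map_toList]
      refine Finset.prod_congr rfl (fun j hj => ?_)
      have hd := hden j hj
      rw [ha, hb]
      field_simp
      ring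
    exact h1.trans h2
  refine ⟨main, ?_, ?_⟩
  · rw [main i]
    exact Finset.prod_eq_one fun j hj => div_self (hden j hj)
  · intro l hl
    rw [main l]
    exact Finset.prod_eq_zero (Finset.mem_erase.2 ⟨hl, Finset.mem_univ l⟩)
      (by rw [sub_self, zero_div])
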